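/- arXiv:1306.2253 — 2 statements merged into one kernel-verified Lean document; each statement's English description precedes it below -/
import Mathlib

section
/- Let j > 0 and let β be a complex number with Re β > 0. Then |tanh(β·j)| < tanh(j) if and only if cosh(2·j·Re β)/cosh(2·j) < cos(2·j·Im β). -/
lemma normSq_cosh' (x y : ℝ) : Complex.normSq (Complex.cosh (x + y*Complex.I)) =
    (Real.cosh (2*x) + Real.cos (2*y))/2 := by
  rw [Complex.cosh_add, Complex.cosh_mul_I, Complex.sinh_mul_I]
  simp [Complex.normSq_apply, ← Complex.ofReal_cosh, ← Complex.ofReal_sinh,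
    ← Complex.ofReal_cos, ← Complex.ofReal_sin]
  nlinarith [Real.cosh_two_mul x, Real.cos_two_mul y, Real.sin_sq_add_cos_sq y, Real.cosh_sq x]

lemma normSq_sinh' (x y : ℝ) : Complex.normSq (Complex.sinh (x + y*Complex.I)) =
    (Real.cosh (2*x) - Real.cos (2*y))/2 := by
  rw [Complex.sinh_add, Complex.cosh_mul_I, Complex.sinh_mul_I]
  simp [Complex.normSq_apply, ← Complex.ofReal_cosh, ← Complex.ofReal_sinh,
    ← Complex.ofReal_cos, ← Complex.ofReal_sin]
  nlinarith [Real.cosh_two_mul x, Real.cos_two_mul y, Real.sin_sq_add_cos_sq y, Real.cosh_sq x]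

theorem abs_tanh_lt_tanh_iff (j : ℝ) (hj : 0 < j) (β : ℂ) (hβ : 0 < β.re) :
    ‖Complex.tanh (β * j)‖ < Real.tanh j ↔
      Real.cosh (2 * j * β.re) / Real.cosh (2 * j) < Real.cos (2 * j * β.im) := by
  set x : ℝ := j * β.re with hx
  set y : ℝ := j * β.im with hy
  have hz : β * (j : ℂ) = (x : ℂ) + (y : ℂ) * Complex.I := by
    simp [hx, hy, Complex.ext_iff, mul_comm]
  have hx0 : 0 < x := mul_pos hj hβ
  -- abbreviations
  set A : ℝ := Real.cosh (2*x) with hA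
  set B : ℝ := Real.cosh (2*j) with hB
  set c : ℝ := Real.cos (2*y) with hc
  have hA1 : 1 < A := by
    rw [hA]
    exact Real.one_lt_cosh.mpr (by positivity)
  have hB1 : 1 < B := by
    rw [hB]
    exact Real.one_lt_cosh.mpr (by positivity)
  have hc1 : |c| ≤ 1 := Real.abs_cos_le_one _
  have hAc : 0 < A + c := by
    have := abs_le.mp hc1
    linarith
  have htj : 0 < Real.tanh j := by
    rw [Real.tanh_eq_sinh_div_cosh]
    exact div_pos (Real.sinh_pos_iff.mpr hj) (Real.cosh_pos j)
  -- square the inequality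
  rw [show ‖Complex.tanh (β * j)‖ < Real.tanh j ↔
      ‖Complex.tanh (β * j)‖ ^ 2 < Real.tanh j ^ 2 from
    (pow_lt_pow_iff_left₀ (norm_nonneg _) htj.le two_ne_zero).symm]
  rw [Complex.sq_norm, Complex.tanh_eq_sinh_div_cosh, map_div₀, hz, normSq_sinh', normSq_cosh']
  have htanh : Real.tanh j ^ 2 = (B - 1) / (B + 1) := by
    rw [Real.tanh_eq_sinh_div_cosh, div_pow, Real.sinh_sq, hB, Real.cosh_two_mul, Real.cosh_sq]
    have h0 : Real.cosh j ^ 2 ≠ 0 := by positivity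
    field_simp
    ring
  rw [show (2*j*β.re) = 2*x by rw [hx]; ring, show (2*j*β.im) = 2*y by rw [hy]; ring,
    ← hA, ← hc, htanh]
  have hhalf : (A - c)/2/((A+c)/2) = (A-c)/(A+c) := by
    rw [div_div_div_comm, div_self (two_ne_zero), div_one]
  rw [hhalf, div_lt_div_iff₀ hAc (by linarith), div_lt_iff₀ (by linarith : (0:ℝ) < B)]
  constructor <;> intro h <;> nlinarith
end

section
/- Let 0 < m ≤ M and let β be a complex number with 0 < Re β < 1, 2·M·|Im β| < π/2, and cosh(2·m·Re β)/cosh(2·m) < cos(2·M·Im β). Then for every j with m ≤ j ≤ M, cosh(2·j·Re β)/cosh(2·j) < cos(2·j·Im β). -/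
lemma cosh_div_antitone (a : ℝ) (ha0 : 0 < a) (ha1 : a < 1) :
    AntitoneOn (fun x => Real.cosh (a * x) / Real.cosh x) (Set.Ici 0) := by
  have hc : ∀ x : ℝ, Real.cosh x ≠ 0 := fun x => (Real.cosh_pos x).ne'
  apply antitoneOn_of_deriv_nonpos (convex_Ici 0)
  · exact (Real.continuous_cosh.comp (continuous_const.mul continuous_id)).div
      Real.continuous_cosh hc |>.continuousOn
  · intro x _
    have h1 : HasDerivAt (fun x => Real.cosh (a * x)) (Real.sinh (a * x) * a) x := by
      simpa [Function.comp_def] using (Real.hasDerivAt_cosh (a * x)).comp x ((hasDerivAt_id x).const_mul a)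
    exact ((h1.div (Real.hasDerivAt_cosh x) (hc x)).differentiableAt).differentiableWithinAt
  · intro x hx
    rw [interior_Ici] at hx
    have hx0 : 0 < x := hx
    have h1 : HasDerivAt (fun x => Real.cosh (a * x)) (Real.sinh (a * x) * a) x := by
      simpa [Function.comp_def] using (Real.hasDerivAt_cosh (a * x)).comp x ((hasDerivAt_id x).const_mul a)
    have hd : deriv (fun x => Real.cosh (a * x) / Real.cosh x) x = _ :=
      (h1.div (Real.hasDerivAt_cosh x) (hc x)).deriv
    rw [hd]
    apply div_nonpos_of_nonpos_of_nonneg _ (sq_nonneg _)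
    have hsub : Real.sinh (a * x) * Real.cosh x - Real.cosh (a * x) * Real.sinh x
        = Real.sinh (a * x - x) := (Real.sinh_sub _ _).symm
    have hneg : Real.sinh (a * x - x) ≤ 0 := by
      rw [Real.sinh_nonpos_iff]  -- may not exist; try
      nlinarith [hx0.le]
    have hs0 : 0 ≤ Real.sinh (a * x) := by
      rw [← Real.sinh_zero]
      exact Real.sinh_le_sinh.mpr (by positivity)
    have hc0 : 0 < Real.cosh x := Real.cosh_pos x
    nlinarith [mul_nonneg (sub_nonneg.2 ha1.le) (mul_nonneg hs0 hc0.le)]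

theorem cosh_cos_ineq_of_endpoints (m M : ℝ) (hm : 0 < m) (hmM : m ≤ M) (β : ℂ)
    (hre0 : 0 < β.re) (hre1 : β.re < 1)
    (him : 2 * M * |β.im| < Real.pi / 2)
    (hend : Real.cosh (2 * m * β.re) / Real.cosh (2 * m) < Real.cos (2 * M * β.im)) :
    ∀ j : ℝ, m ≤ j → j ≤ M →
      Real.cosh (2 * j * β.re) / Real.cosh (2 * j) < Real.cos (2 * j * β.im) := by
  intro j hmj hjM
  have hj0 : 0 < j := lt_of_lt_of_le hm hmj
  have step1 : Real.cosh (2 * j * β.re) / Real.cosh (2 * j)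
      ≤ Real.cosh (2 * m * β.re) / Real.cosh (2 * m) := by
    have h := cosh_div_antitone β.re hre0 hre1
      (Set.mem_Ici.2 (by linarith : (0:ℝ) ≤ 2 * m))
      (Set.mem_Ici.2 (by linarith : (0:ℝ) ≤ 2 * j))
      (by linarith : 2 * m ≤ 2 * j)
    simp only [] at h
    rw [show β.re * (2 * j) = 2 * j * β.re from by ring,
        show β.re * (2 * m) = 2 * m * β.re from by ring] at h
    exact h
  have hb0 : 0 ≤ |β.im| := abs_nonneg _
  have step2 : Real.cos (2 * M * β.im) ≤ Real.cos (2 * j * β.im) := by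
    have e1 : Real.cos (2 * j * β.im) = Real.cos (2 * j * |β.im|) := by
      rcases abs_cases β.im with ⟨h, _⟩ | ⟨h, _⟩
      · rw [h]
      · rw [h, mul_neg, Real.cos_neg]
    have e2 : Real.cos (2 * M * β.im) = Real.cos (2 * M * |β.im|) := by
      rcases abs_cases β.im with ⟨h, _⟩ | ⟨h, _⟩
      · rw [h]
      · rw [h, mul_neg, Real.cos_neg]
    rw [e1, e2]
    apply Real.cos_le_cos_of_nonneg_of_le_pi
    · positivity
    · nlinarith [Real.pi_pos]
    · nlinarith
  calc Real.cosh (2 * j * β.re) / Real.cosh (2 * j)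
      ≤ Real.cosh (2 * m * β.re) / Real.cosh (2 * m) := step1
    _ < Real.cos (2 * M * β.im) := hend
    _ ≤ Real.cos (2 * j * β.im) := step2
end
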